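/- Let A be an n×n symmetric positive definite real matrix, b a vector in ℝⁿ, and let H₀, W₀ be n×n symmetric positive definite matrices. Define the probabilistic linear solver iteration: x₀ = H₀b, r₀ = Ax₀ − b, and for i ≥ 1: sᵢ = −H_{i−1} r_{i−1}, yᵢ = A sᵢ, αᵢ = −(sᵢᵀ r_{i−1})/(sᵢᵀ yᵢ), xᵢ = x_{i−1} + αᵢ sᵢ, rᵢ = r_{i−1} + αᵢ yᵢ, and Hᵢ = H₀ + Δᵢ Uᵢᵀ + Uᵢ Δᵢᵀ − Uᵢ Yᵢᵀ Δᵢ Uᵢᵀ, where Sᵢ = [s₁,…,sᵢ] ∈ ℝ^{n×i}, Yᵢ = [y₁,…,yᵢ] = A Sᵢ, Δᵢ = Sᵢ − H₀Yᵢ, and Uᵢ = W₀Yᵢ (YᵢᵀW₀Yᵢ)⁻¹. Suppose that for all 1 ≤ i ≤ k the iteration is well defined (sᵢ ≠ 0 and YᵢᵀW₀Yᵢ is invertible). Then the actions are A-conjugate: sᵢᵀ A sⱼ = 0 for all 1 ≤ i, j ≤ k with i ≠ j. -/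

import Mathlib

open Matrix

/-- The actions of the probabilistic linear solver are `A`-conjugate. -/
theorem stmt_0
    {n k : ℕ} (A : Matrix (Fin n) (Fin n) ℝ) (hA : A.PosDef)
    (b : Fin n → ℝ)
    (H₀ W₀ : Matrix (Fin n) (Fin n) ℝ) (hH₀ : H₀.PosDef) (hW₀ : W₀.PosDef)
    (x r s y : ℕ → Fin n → ℝ) (α : ℕ → ℝ)
    (H : ℕ → Matrix (Fin n) (Fin n) ℝ)
    (S Y Δ U : (i : ℕ) → Matrix (Fin n) (Fin i) ℝ)
    (hS : ∀ i (j : Fin n) (l : Fin i), S i j l = s (l.val + 1) j)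
    (hY : ∀ i, Y i = A * S i)
    (hΔ : ∀ i, Δ i = S i - H₀ * Y i)
    (hU : ∀ i, U i = W₀ * Y i * ((Y i)ᵀ * W₀ * Y i)⁻¹)
    (hx0 : x 0 = H₀.mulVec b)
    (hr0 : r 0 = A.mulVec (x 0) - b)
    (hH0 : H 0 = H₀)
    (hs : ∀ i, s (i + 1) = -(H i).mulVec (r i))
    (hy : ∀ i, y (i + 1) = A.mulVec (s (i + 1)))
    (hα : ∀ i, α (i + 1) = -(s (i + 1) ⬝ᵥ r i) / (s (i + 1) ⬝ᵥ y (i + 1)))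
    (hx : ∀ i, x (i + 1) = x i + α (i + 1) • s (i + 1))
    (hr : ∀ i, r (i + 1) = r i + α (i + 1) • y (i + 1))
    (hH : ∀ i, H (i + 1) = H₀ + Δ (i + 1) * (U (i + 1))ᵀ + U (i + 1) * (Δ (i + 1))ᵀ
      - U (i + 1) * (Y (i + 1))ᵀ * Δ (i + 1) * (U (i + 1))ᵀ)
    (h_wd : ∀ i, 1 ≤ i → i ≤ k → s i ≠ 0 ∧ IsUnit ((Y i)ᵀ * W₀ * Y i).det) :
    ∀ i j, 1 ≤ i → i ≤ k → 1 ≤ j → j ≤ k → i ≠ j →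
      s i ⬝ᵥ A.mulVec (s j) = 0 := by
  have hAT : Aᵀ = A := hA.isHermitian
  have hHT : H₀ᵀ = H₀ := hH₀.isHermitian
  have hWT : W₀ᵀ = W₀ := hW₀.isHermitian
  have swap : ∀ (M : Matrix (Fin n) (Fin n) ℝ) (u w : Fin n → ℝ),
      M *ᵥ u ⬝ᵥ w = u ⬝ᵥ Mᵀ *ᵥ w := by
    intro M u w
    rw [Matrix.dotProduct_mulVec, Matrix.vecMul_transpose]
  -- symmetry of YᵀΔ
  have hYtΔ : ∀ i, (Y i)ᵀ * Δ i = (Δ i)ᵀ * Y i := by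
    intro i
    rw [hΔ, hY]
    simp only [Matrix.transpose_sub, Matrix.transpose_mul, hAT, hHT,
      Matrix.mul_sub, Matrix.sub_mul, Matrix.mul_assoc]
  -- UᵀY = 1
  have hUtY : ∀ i, 1 ≤ i → i ≤ k → (U i)ᵀ * Y i = 1 := by
    intro i h1 hk
    have hu := (h_wd i h1 hk).2
    have hGT : ((Y i)ᵀ * W₀ * Y i)ᵀ = (Y i)ᵀ * W₀ * Y i := by
      simp [Matrix.transpose_mul, hWT, Matrix.mul_assoc]
    rw [hU]
    calc (W₀ * Y i * ((Y i)ᵀ * W₀ * Y i)⁻¹)ᵀ * Y i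
        = ((Y i)ᵀ * W₀ * Y i)⁻¹ᵀ * ((Y i)ᵀ * W₀ᵀ * Y i) := by
          simp [Matrix.transpose_mul, Matrix.mul_assoc]
      _ = ((Y i)ᵀ * W₀ * Y i)⁻¹ * ((Y i)ᵀ * W₀ * Y i) := by
          rw [Matrix.transpose_nonsing_inv, hGT, hWT]
      _ = 1 := Matrix.nonsing_inv_mul _ hu
  -- H i * Y i = S i
  have hHYS : ∀ i, 1 ≤ i → i ≤ k → H i * Y i = S i := by
    intro i h1 hk
    obtain ⟨m, rfl⟩ : ∃ m, i = m + 1 := ⟨i - 1, by omega⟩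
    rw [hH m]
    simp only [Matrix.sub_mul, Matrix.add_mul, Matrix.mul_assoc,
      hUtY _ h1 hk, Matrix.mul_one]
    rw [hYtΔ, hΔ]
    abel
  -- symmetry of H i
  have hHsym : ∀ i, (H i)ᵀ = H i := by
    intro i
    cases i with
    | zero => rw [hH0]; exact hHT
    | succ m =>
      rw [hH m]
      simp only [Matrix.transpose_add, Matrix.transpose_sub, Matrix.transpose_mul,
        Matrix.transpose_transpose, hHT, Matrix.mul_assoc]
      have key : (Δ (m+1))ᵀ * (Y (m+1) * (U (m+1))ᵀ)
          = (Y (m+1))ᵀ * (Δ (m+1) * (U (m+1))ᵀ) := by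
        rw [← Matrix.mul_assoc, ← hYtΔ, Matrix.mul_assoc]
      rw [key]
      abel
  -- column identification : H i maps y j to s j
  have hHy : ∀ i j, 1 ≤ j → j ≤ i → i ≤ k → (H i).mulVec (y j) = s j := by
    intro i j hj1 hji hik
    have h1 : 1 ≤ i := le_trans hj1 hji
    have hHYi := hHYS i h1 hik
    set l : Fin i := ⟨j - 1, by omega⟩ with hl
    have hjl : l.val + 1 = j := by simp [hl, Nat.sub_add_cancel hj1]
    have hYcol : ∀ m, Y i m l = y j m := by
      intro m
      rw [hY, ← hjl, hy]
      simp [Matrix.mul_apply, Matrix.mulVec, dotProduct, hS]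
    funext a
    have hcol := congrFun (congrFun hHYi a) l
    rw [Matrix.mul_apply] at hcol
    have hlhs : (H i).mulVec (y j) a = ∑ m, H i a m * Y i m l := by
      simp [Matrix.mulVec, dotProduct, hYcol]
    rw [hlhs, hcol, hS, hjl]
  -- positivity of sᵀAs for well-defined steps
  have hsy_pos : ∀ i, 1 ≤ i → i ≤ k → 0 < s i ⬝ᵥ y i := by
    intro i h1 hk
    obtain ⟨m, rfl⟩ : ∃ m, i = m + 1 := ⟨i - 1, by omega⟩
    rw [hy]
    simpa using hA.dotProduct_mulVec_pos (h_wd _ h1 hk).1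
  -- main joint induction
  have main : ∀ i, i ≤ k →
      (∀ j, 1 ≤ j → j ≤ i → s j ⬝ᵥ r i = 0) ∧
      (∀ j m, 1 ≤ j → j ≤ i → 1 ≤ m → m ≤ i → j ≠ m →
        s j ⬝ᵥ A.mulVec (s m) = 0) := by
    intro i
    induction i with
    | zero => exact fun _ => ⟨fun j hj1 hj0 => absurd (le_trans hj1 hj0) (by omega),
        fun j m hj1 hj0 _ _ _ => absurd (le_trans hj1 hj0) (by omega)⟩
    | succ i ih =>
      intro hik
      have hik' : i ≤ k := by omega
      obtain ⟨orth, conj⟩ := ih hik'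
      -- new conjugacy: s (i+1) vs s m for m ≤ i
      have hnew : ∀ m, 1 ≤ m → m ≤ i → s (i+1) ⬝ᵥ A.mulVec (s m) = 0 := by
        intro m hm1 hmi
        obtain ⟨m', rfl⟩ : ∃ m', m = m' + 1 := ⟨m - 1, by omega⟩
        rw [hs, neg_dotProduct, swap, hHsym, ← hy, hHy i (m'+1) hm1 hmi hik',
          dotProduct_comm, orth _ hm1 hmi, neg_zero]
      have hconj' : ∀ j m, 1 ≤ j → j ≤ i + 1 → 1 ≤ m → m ≤ i + 1 → j ≠ m →
          s j ⬝ᵥ A.mulVec (s m) = 0 := by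
        intro j m hj1 hji hm1 hmi hjm
        rcases Nat.lt_or_ge j (i+1) with hj | hj
        · rcases Nat.lt_or_ge m (i+1) with hm | hm
          · exact conj j m hj1 (by omega) hm1 (by omega) hjm
          · have hm' : m = i + 1 := by omega
            subst hm'
            have h0 := hnew j hj1 (by omega)
            calc s j ⬝ᵥ A.mulVec (s (i+1))
                = A.mulVec (s j) ⬝ᵥ s (i+1) := by
                  rw [swap, hAT]
              _ = s (i+1) ⬝ᵥ A.mulVec (s j) := dotProduct_comm _ _
              _ = 0 := h0
        · have hj' : j = i + 1 := by omega
          subst hj'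
          exact hnew m hm1 (by omega)
      refine ⟨?_, hconj'⟩
      intro j hj1 hji
      rcases Nat.lt_or_ge j (i+1) with hj | hj
      · rw [hr, dotProduct_add, dotProduct_smul, orth j hj1 (by omega)]
        rw [hy]
        have h0 := hconj' j (i+1) hj1 (by omega) (by omega) (by omega) (by omega)
        simp [h0]
      · have hj' : j = i + 1 := by omega
        subst hj'
        rw [hr, dotProduct_add, dotProduct_smul, hα]
        have hpos := hsy_pos (i+1) (by omega) hik
        have hne : s (i+1) ⬝ᵥ y (i+1) ≠ 0 := ne_of_gt hpos
        rw [smul_eq_mul]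
        field_simp
        ring
  intro i j hi1 hik hj1 hjk hij
  exact (main k le_rfl).2 i j hi1 hik hj1 hjk hij
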